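/- In Twyst-off extended to allow infinite stacks, for any finite stack sizes a₁,...,a_{n-1} (with n ≥ 1), the position (a₁,...,a_{n-1},∞) is an N position. -/

import Mathlib

namespace TwystOffInf

/-- Contraction for stacks of size in `ℕ∞`: merge the two neighbors of an interior zero
stack (merging with an infinite stack gives `⊤`); delete empty end stacks. -/
def contract : List ℕ∞ → List ℕ∞
  | [] => []
  | a :: t =>
    if a = 0 then contract t
    else match t with
      | [] => [a]
      | [b] => if b = 0 then [a] else [a, b]
      | b :: c :: r => if b = 0 then contract ((a + c) :: r) else a :: contract (b :: c :: r)
termination_by l => l.length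

/-- A raw move in Twyst-off with infinite stacks:
* reduce an end stack to any strictly smaller value (an `∞` end stack becomes any finite size);
* remove the same finite `k > 0` from two consecutive stacks, not both infinite
  (here `⊤ - k = ⊤`, so a pair `(∞, b)` becomes `(∞, b - k)`);
* reduce a consecutive pair `(∞, ∞)` to `(k, k)` for any finite `k`.
The result is then contracted. -/
def premove (p q : List ℕ∞) : Prop :=
  (∃ a t a', p = a :: t ∧ a' < a ∧ q = contract (a' :: t)) ∨
  (∃ a t a', p = t ++ [a] ∧ a' < a ∧ q = contract (t ++ [a'])) ∨
  (∃ α a b β, ∃ k : ℕ, p = α ++ a :: b :: β ∧ 0 < k ∧ (k : ℕ∞) ≤ a ∧ (k : ℕ∞) ≤ b ∧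
      (a ≠ ⊤ ∨ b ≠ ⊤) ∧ q = contract (α ++ (a - (k : ℕ∞)) :: (b - (k : ℕ∞)) :: β)) ∨
  (∃ α β, ∃ k : ℕ, p = α ++ (⊤ : ℕ∞) :: (⊤ : ℕ∞) :: β ∧
      q = contract (α ++ (k : ℕ∞) :: (k : ℕ∞) :: β))

/-- Moves (positions are considered up to contraction). -/
def Move (p q : List ℕ∞) : Prop := premove (contract p) q

/-- P positions: every option is an N position, i.e. for every option there is a choice of
a further P option.  (The game terminates, so this inductive definition agrees with the
usual recursive definition of P and N positions.) -/
inductive PPos : List ℕ∞ → Prop where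
  | mk (p : List ℕ∞) (opt : ∀ q, Move p q → List ℕ∞)
      (hmove : ∀ q (h : Move p q), Move q (opt q h))
      (hP : ∀ q (h : Move p q), PPos (opt q h)) : PPos p

/-- N positions: some option is a P position. -/
def NPos (p : List ℕ∞) : Prop := ∃ q, Move p q ∧ PPos q

lemma contract_nil : contract [] = [] := by rw [contract.eq_def]
lemma contract_cons_zero (t : List ℕ∞) : contract (0 :: t) = contract t := by
  rw [contract.eq_def]; simp
lemma contract_singleton {a : ℕ∞} (h : a ≠ 0) : contract [a] = [a] := by
  rw [contract.eq_def]; simp [h]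
lemma contract_pair {a : ℕ∞} (b : ℕ∞) (ha : a ≠ 0) :
    contract [a, b] = if b = 0 then [a] else [a, b] := by
  rw [contract.eq_def]; simp [ha]
lemma contract_cons_cons {a : ℕ∞} (b c : ℕ∞) (r : List ℕ∞) (ha : a ≠ 0) :
    contract (a :: b :: c :: r) =
      if b = 0 then contract ((a + c) :: r) else a :: contract (b :: c :: r) := by
  rw [contract.eq_def]; simp [ha]

def tc (l : List ℕ∞) : ℕ := l.count ⊤
def sf (l : List ℕ∞) : ℕ := (l.map ENat.toNat).sum

@[simp] lemma tc_nil : tc [] = 0 := rfl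
@[simp] lemma tc_cons (a : ℕ∞) (l : List ℕ∞) :
    tc (a :: l) = (if a = ⊤ then 1 else 0) + tc l := by
  by_cases h : a = ⊤ <;> simp [tc, List.count_cons, h, Nat.add_comm]
@[simp] lemma tc_append (l₁ l₂ : List ℕ∞) : tc (l₁ ++ l₂) = tc l₁ + tc l₂ := by
  simp [tc, List.count_append]
@[simp] lemma sf_nil : sf [] = 0 := rfl
@[simp] lemma sf_cons (a : ℕ∞) (l : List ℕ∞) : sf (a :: l) = a.toNat + sf l := by
  simp [sf]
@[simp] lemma sf_append (l₁ l₂ : List ℕ∞) : sf (l₁ ++ l₂) = sf l₁ + sf l₂ := by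
  simp [sf]

lemma toNat_add_le (a c : ℕ∞) : (a + c).toNat ≤ a.toNat + c.toNat := by
  cases a using ENat.recTopCoe
  · simp
  cases c using ENat.recTopCoe
  · simp
  · exact le_of_eq (by rw [← Nat.cast_add, ENat.toNat_coe, ENat.toNat_coe, ENat.toNat_coe])

lemma contract_le (l : List ℕ∞) :
    (contract l).length ≤ l.length ∧ tc (contract l) ≤ tc l ∧ sf (contract l) ≤ sf l := by
  induction l using contract.induct with
  | case1 => simp [contract_nil]
  | case2 t ih =>
    rw [contract_cons_zero]
    refine ⟨ih.1.trans (by simp), ?_, ?_⟩ <;> simp <;> omega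
  | case3 a ha => simp [contract_singleton ha]
  | case4 a ha => rw [contract_pair _ ha]; simp
  | case5 a ha b hb => rw [contract_pair _ ha]; simp [hb]
  | case6 a ha c r ih =>
    rw [contract_cons_cons _ _ _ ha]
    simp only [if_pos rfl]
    have h1 := toNat_add_le a c
    have h2 : (if a + c = ⊤ then 1 else 0) ≤ (if a = ⊤ then 1 else 0) + (if c = ⊤ then 1 else 0) := by
      by_cases h : a + c = ⊤
      · rcases ENat.add_eq_top.mp h with h' | h' <;> simp [h, h']
      · simp [h]
    obtain ⟨ih1, ih2, ih3⟩ := ih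
    refine ⟨?_, ?_, ?_⟩
    · simp at ih1 ⊢; omega
    · have h0 : (if (0:ℕ∞) = ⊤ then (1:ℕ) else 0) = 0 := by simp
      simp only [tc_cons, if_true] at ih2 ⊢; omega
    · simp at ih3 ⊢; omega
  | case7 a ha b c r hb ih =>
    rw [contract_cons_cons _ _ _ ha]
    simp only [if_neg hb]
    obtain ⟨ih1, ih2, ih3⟩ := ih
    refine ⟨?_, ?_, ?_⟩
    · simp at ih1 ⊢; omega
    · simp at ih2 ⊢; omega
    · simp at ih3 ⊢; omega

lemma contract_eq_self : ∀ {l : List ℕ∞}, (0:ℕ∞) ∉ l → contract l = l := by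
  intro l
  induction l using contract.induct with
  | case1 => intro _; exact contract_nil
  | case2 t ih => intro h; simp at h
  | case3 a ha => intro _; exact contract_singleton ha
  | case4 a ha => intro h; simp at h
  | case5 a ha b hb => intro _; rw [contract_pair _ ha, if_neg hb]
  | case6 a ha c r ih => intro h; simp at h
  | case7 a ha b c r hb ih =>
    intro h
    rw [contract_cons_cons _ _ _ ha, if_neg hb, ih (by simp at h ⊢; tauto)]

lemma add_ne_zero_left {a : ℕ∞} (n : ℕ∞) (ha : a ≠ 0) : a + n ≠ 0 := by
  intro h
  exact ha (by simpa using (add_eq_zero.mp h).1)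

lemma contract_append_last : ∀ (N : ℕ) (u : List ℕ∞), u.length ≤ N → ⊤ ∉ u →
    ∃ (v : List ℕ∞) (e : ℕ), (0:ℕ∞) ∉ v ∧ ⊤ ∉ v ∧
      ∀ n : ℕ∞, n ≠ 0 → contract (u ++ [n]) = v ++ [n + (e:ℕ∞)] := by
  intro N
  induction N with
  | zero =>
    rintro (_ | ⟨a, t⟩) h hu
    · exact ⟨[], 0, by simp, by simp, fun n hn => by
        simpa using contract_singleton hn⟩
    · simp at h
  | succ N ih =>
    rintro (_ | ⟨a, t⟩) h hu
    · exact ⟨[], 0, by simp, by simp, fun n hn => by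
        simpa using contract_singleton hn⟩
    · have haT : a ≠ ⊤ := by simp at hu; tauto
      have htT : ⊤ ∉ t := by simp at hu; tauto
      by_cases ha : a = 0
      · subst ha
        obtain ⟨v, e, h1, h2, h3⟩ := ih t (by simpa using h) htT
        exact ⟨v, e, h1, h2, fun n hn => by
          rw [List.cons_append, contract_cons_zero]; exact h3 n hn⟩
      · rcases t with _ | ⟨b, t⟩
        · refine ⟨[a], 0, ?_, ?_, fun n hn => ?_⟩
          · simp only [List.mem_singleton]; exact Ne.symm ha
          · simp only [List.mem_singleton]; exact Ne.symm haT
          · rw [List.cons_append, List.nil_append, contract_pair _ ha, if_neg hn]; simp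
        · have hbT : b ≠ ⊤ := by simp at htT; tauto
          have htT' : ⊤ ∉ t := by simp at htT; tauto
          rcases t with _ | ⟨c, t⟩
          · -- u = [a, b]
            by_cases hb : b = 0
            · subst hb
              refine ⟨[], a.toNat, by simp, by simp, fun n hn => ?_⟩
              have e1 : contract ([a, 0] ++ [n]) = contract [a + n] := by
                simp only [List.cons_append, List.nil_append]
                rw [contract_cons_cons _ _ _ ha, if_pos rfl]
              have e2 : a + n = n + (a.toNat : ℕ∞) := by
                rw [ENat.coe_toNat haT, add_comm]
              rw [e1, contract_singleton (add_ne_zero_left n ha), e2]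
              simp
            · refine ⟨[a, b], 0, ?_, ?_, fun n hn => ?_⟩
              · simp only [List.mem_cons, List.mem_singleton]
                push_neg
                exact ⟨Ne.symm ha, Ne.symm hb, by simp⟩
              · simp only [List.mem_cons, List.mem_singleton]
                push_neg
                exact ⟨Ne.symm haT, Ne.symm hbT, by simp⟩
              · simp only [List.cons_append, List.nil_append]
                rw [contract_cons_cons _ _ _ ha, if_neg hb, contract_pair _ hb, if_neg hn]
                simp
          · -- u = a :: b :: c :: t
            by_cases hb : b = 0
            · subst hb
              have hcT : c ≠ ⊤ := by simp at htT'; tauto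
              have hacT : a + c ≠ ⊤ := WithTop.add_ne_top.mpr ⟨haT, hcT⟩
              obtain ⟨v, e, h1, h2, h3⟩ := ih ((a + c) :: t)
                (by simp at h ⊢; omega)
                (fun hm => by
                  rcases List.mem_cons.mp hm with h' | h'
                  · exact hacT h'.symm
                  · exact htT' (by simp [h']))
              refine ⟨v, e, h1, h2, fun n hn => ?_⟩
              have h3' := h3 n hn
              simp only [List.cons_append] at h3' ⊢
              rw [contract_cons_cons _ _ _ ha, if_pos rfl]
              exact h3'
            · obtain ⟨v, e, h1, h2, h3⟩ := ih (b :: c :: t)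
                (by simp at h ⊢; omega)
                (fun hm => by
                  rcases List.mem_cons.mp hm with h' | h'
                  · exact hbT h'.symm
                  · exact htT' h')
              refine ⟨a :: v, e, ?_, ?_, fun n hn => ?_⟩
              · simp only [List.mem_cons]
                push_neg
                exact ⟨Ne.symm ha, fun hm => h1 hm⟩
              · simp only [List.mem_cons]
                push_neg
                exact ⟨Ne.symm haT, fun hm => h2 hm⟩
              · have h3' := h3 n hn
                simp only [List.cons_append] at h3' ⊢
                rw [contract_cons_cons _ _ _ ha, if_neg hb, h3']

lemma toNat_lt {a b : ℕ∞} (h : a < b) (hb : b ≠ ⊤) : a.toNat < b.toNat := by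
  have ha : a ≠ ⊤ := by
    intro h'; subst h'; exact hb (top_le_iff.mp h.le)
  lift a to ℕ using ha
  lift b to ℕ using hb
  rw [ENat.toNat_coe, ENat.toNat_coe]
  exact_mod_cast h

lemma premove_dec {cp q : List ℕ∞} (h : premove cp q) :
    tc q < tc cp ∨ (tc q = tc cp ∧ sf q < sf cp) := by
  have key : ∀ w : List ℕ∞, q = contract w →
      (tc w < tc cp ∨ (tc w = tc cp ∧ sf w < sf cp)) →
      tc q < tc cp ∨ (tc q = tc cp ∧ sf q < sf cp) := by
    rintro w rfl hw
    have h1 := (contract_le w).2.1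
    have h2 := (contract_le w).2.2
    omega
  have endcase : ∀ a a' : ℕ∞, a' < a →
      ((if a' = ⊤ then 1 else 0) + (0:ℕ) < (if a = ⊤ then 1 else 0) + 0 ∨
       ((if a' = ⊤ then (1:ℕ) else 0) = (if a = ⊤ then 1 else 0) ∧ a'.toNat < a.toNat)) := by
    intro a a' hlt
    by_cases haT : a = ⊤
    · subst haT
      simp [hlt.ne]
    · have ha' : a' ≠ ⊤ := by
        intro h'; subst h'; exact haT (top_le_iff.mp hlt.le)
      exact Or.inr ⟨by simp [haT, ha'], toNat_lt hlt haT⟩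
  rcases h with ⟨a, t, a', rfl, hlt, hq⟩ | ⟨a, t, a', rfl, hlt, hq⟩ |
    ⟨α, a, b, β, k, rfl, hk, hka, hkb, hne, hq⟩ | ⟨α, β, k, rfl, hq⟩
  · refine key _ hq ?_
    have := endcase a a' hlt
    simp only [tc_cons, sf_cons]
    omega
  · refine key _ hq ?_
    have := endcase a a' hlt
    simp only [tc_append, sf_append, tc_cons, sf_cons, tc_nil, sf_nil]
    omega
  · refine key _ hq ?_
    have main : ∀ x : ℕ∞, (k:ℕ∞) ≤ x →
        ((x = ⊤ ∧ x - (k:ℕ∞) = ⊤ ∧ (x - (k:ℕ∞)).toNat = 0 ∧ x.toNat = 0) ∨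
         (x ≠ ⊤ ∧ x - (k:ℕ∞) ≠ ⊤ ∧ (x - (k:ℕ∞)).toNat + k = x.toNat)) := by
      intro x hx
      by_cases hxT : x = ⊤
      · subst hxT
        exact Or.inl ⟨rfl, ENat.top_sub_coe k, by simp [ENat.top_sub_coe], rfl⟩
      · refine Or.inr ⟨hxT, ?_, ?_⟩
        · lift x to ℕ using hxT
          rw [← ENat.coe_sub]
          exact ENat.coe_ne_top _
        · lift x to ℕ using hxT
          rw [← ENat.coe_sub, ENat.toNat_coe, ENat.toNat_coe]
          have : k ≤ x := by exact_mod_cast hx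
          omega
    have ha' := main a hka
    have hb' := main b hkb
    simp only [tc_append, tc_cons, sf_append, sf_cons]
    rcases ha' with ⟨e1, e2, e3, e4⟩ | ⟨e1, e2, e3⟩ <;>
      rcases hb' with ⟨f1, f2, f3, f4⟩ | ⟨f1, f2, f3⟩
    · rcases hne with h | h
      · exact absurd e1 h
      · exact absurd f1 h
    · have e3' : (a - (k:ℕ∞)).toNat = 0 := e3
      have e4' : a.toNat = 0 := e4
      simp only [e1, e2, f1, f2, e3', e4', ENat.top_sub_coe, ENat.toNat_top,
        if_pos rfl, if_neg f1, if_neg f2, if_true, if_false, true_and, and_true,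
        lt_self_iff_false, false_or, eq_self_iff_true]
      omega
    · have f3' : (b - (k:ℕ∞)).toNat = 0 := f3
      have f4' : b.toNat = 0 := f4
      simp only [f1, f2, e1, e2, f3', f4', ENat.top_sub_coe, ENat.toNat_top,
        if_pos rfl, if_neg e1, if_neg e2, if_true, if_false, true_and, and_true,
        lt_self_iff_false, false_or, eq_self_iff_true]
      omega
    · simp only [if_neg e1, if_neg e2, if_neg f1, if_neg f2, if_false, true_and, and_true,
        lt_self_iff_false, false_or, eq_self_iff_true]
      omega
  · refine key _ hq ?_
    simp only [tc_append, tc_cons, sf_append, sf_cons]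
    simp only [if_pos rfl, if_neg (ENat.coe_ne_top k), if_true]
    omega

lemma not_NPos_of_PPos : ∀ {p : List ℕ∞}, PPos p → ¬ NPos p := by
  intro p h
  induction h with
  | mk p opt hmove hP ih =>
    rintro ⟨r, hpr, hr⟩
    apply ih r hpr
    obtain ⟨_, opt', hmove', hP'⟩ := hr
    exact ⟨opt' _ (hmove r hpr), hmove' _ (hmove r hpr), hP' _ (hmove r hpr)⟩

lemma move_dec {p q : List ℕ∞} (h : Move p q) :
    tc q < tc p ∨ (tc q = tc p ∧ sf q < sf p) := by
  have h1 := premove_dec h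
  have h2 := (contract_le p).2.1
  have h3 := (contract_le p).2.2
  omega

lemma determined (p : List ℕ∞) : PPos p ∨ NPos p := by
  suffices H : ∀ c s (p : List ℕ∞), tc p < c → sf p < s → PPos p ∨ NPos p from
    H (tc p + 1) (sf p + 1) p (Nat.lt_succ_self _) (Nat.lt_succ_self _)
  intro c
  induction c with
  | zero => intro s p hc _; omega
  | succ c ihc =>
    intro s
    induction s with
    | zero => intro p _ hs; omega
    | succ s ihs =>
      intro p hc hs
      by_cases hN : ∃ q, Move p q ∧ PPos q
      · exact Or.inr hN
      · push_neg at hN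
        have hall : ∀ q, Move p q → NPos q := by
          intro q hq
          have hd := move_dec hq
          have : PPos q ∨ NPos q := by
            rcases hd with h | ⟨he, hs'⟩
            · exact ihc (sf q + 1) q (by omega) (by omega)
            · exact ihs q (by omega) (by omega)
          exact this.resolve_left (hN q hq)
        exact Or.inl (PPos.mk p (fun q h => Classical.choose (hall q h))
          (fun q h => (Classical.choose_spec (hall q h)).1)
          (fun q h => (Classical.choose_spec (hall q h)).2))

lemma no_move_nil {q : List ℕ∞} : ¬ Move [] q := by
  rintro (⟨a, t, a', h, _, _⟩ | ⟨a, t, a', h, _, _⟩ |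
    ⟨α, a, b, β, k, h, _⟩ | ⟨α, β, k, h, _⟩) <;>
    rw [contract_nil] at h <;> simp at h

lemma PPos_nil : PPos [] :=
  PPos.mk [] (fun _ h => absurd h no_move_nil)
    (fun _ h => absurd h no_move_nil) (fun _ h => absurd h no_move_nil)

lemma sub_ne_top {z : ℕ∞} (hz : z ≠ ⊤) (K : ℕ) : z - (K:ℕ∞) ≠ ⊤ := by
  lift z to ℕ using hz
  rw [← ENat.coe_sub]
  exact ENat.coe_ne_top _

lemma key_lemma (y : List ℕ∞) (A : ℕ)
    (hx0 : (0:ℕ∞) ∉ y ++ [(A:ℕ∞)]) (hxT : ⊤ ∉ y ++ [(A:ℕ∞)])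
    (k : ℕ) (hAk : A < k) (r : List ℕ∞)
    (h : premove ((y ++ [(A:ℕ∞)]) ++ [(k:ℕ∞)]) r)
    (hnotP : ∀ j : ℕ, ¬ PPos (contract ((y ++ [(A:ℕ∞)]) ++ [(j:ℕ∞)])))
    (hrP : PPos r) :
    ∃ (w : List ℕ∞) (n : ℕ), r = w ++ [(n:ℕ∞)] ∧ (0:ℕ∞) ∉ w ∧ ⊤ ∉ w ∧ k - A ≤ n := by
  have hyT : ⊤ ∉ y := fun hm => hxT (by simp [hm])
  rcases h with ⟨a, t, a', heq, hlt, hr⟩ | ⟨a, t, a', heq, hlt, hr⟩ |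
    ⟨α, a, b, β, K, heq, hK, hKa, hKb, hne, hr⟩ | ⟨α, β, K, heq, hr⟩
  · -- left end move
    obtain ⟨x₀, xs, hxe⟩ : ∃ x₀ xs, y ++ [(A:ℕ∞)] = x₀ :: xs := by
      cases y with
      | nil => exact ⟨_, _, rfl⟩
      | cons y₀ ys => exact ⟨y₀, ys ++ [(A:ℕ∞)], rfl⟩
    rw [hxe, List.cons_append] at heq
    injection heq with h1 h2
    subst h1
    subst h2
    have hxsT : ⊤ ∉ xs := by
      intro hm
      apply hxT
      rw [hxe]
      exact List.mem_cons_of_mem _ hm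
    have hx0T : x₀ ≠ ⊤ := by
      intro he
      apply hxT
      rw [hxe, he]
      exact List.mem_cons_self
    have ha'T : a' ≠ ⊤ := by
      intro he
      subst he
      exact hx0T (top_le_iff.mp hlt.le)
    obtain ⟨v, e, hv0, hvT, hve⟩ := contract_append_last (a' :: xs).length (a' :: xs)
      le_rfl (by
        intro hm
        rcases List.mem_cons.mp hm with h' | h'
        · exact ha'T h'.symm
        · exact hxsT h')
    refine ⟨v, k + e, ?_, hv0, hvT, by omega⟩
    rw [hr, show a' :: (xs ++ [(k:ℕ∞)]) = (a' :: xs) ++ [(k:ℕ∞)] by simp,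
      hve _ (by exact_mod_cast (show k ≠ 0 by omega))]
    push_cast
    ring_nf
  · -- right end move: contradiction with hnotP
    obtain ⟨h1, h2⟩ := List.append_inj' heq rfl
    injection h2 with h2 _
    subst h2
    have ha'T : a' ≠ ⊤ := by
      intro he
      subst he
      exact ENat.coe_ne_top k (top_le_iff.mp hlt.le)
    lift a' to ℕ using ha'T with j
    exfalso
    apply hnotP j
    rw [h1]
    rw [← hr] at *
    exact hrP
  · -- pair move
    rcases List.eq_nil_or_concat β with hβ | ⟨β', c, hβ⟩
    · subst hβ
      have heq' : (y ++ [(A:ℕ∞)]) ++ [(k:ℕ∞)] = (α ++ [a]) ++ [b] := by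
        rw [heq]; simp
      obtain ⟨h1, h2⟩ := List.append_inj' heq' rfl
      injection h2 with h2 _
      obtain ⟨h3, h4⟩ := List.append_inj' h1 rfl
      injection h4 with h4 _
      subst h3
      have hKA : K ≤ A := by rw [← h4] at hKa; exact_mod_cast hKa
      have hsub1 : a - (K:ℕ∞) = ((A - K : ℕ) : ℕ∞) := by
        rw [← h4, ENat.coe_sub]
      have hsub2 : b - (K:ℕ∞) = ((k - K : ℕ) : ℕ∞) := by
        rw [← h2, ENat.coe_sub]
      obtain ⟨v, e, hv0, hvT, hve⟩ := contract_append_last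
        (y ++ [((A - K : ℕ) : ℕ∞)]).length (y ++ [((A - K : ℕ) : ℕ∞)]) le_rfl
        (by
          intro hm
          rcases List.mem_append.mp hm with h' | h'
          · exact hyT h'
          · exact ENat.coe_ne_top _ (List.mem_singleton.mp h').symm)
      refine ⟨v, (k - K) + e, ?_, hv0, hvT, by omega⟩
      rw [hr, hsub1, hsub2,
        show y ++ ((A - K : ℕ) : ℕ∞) :: ((k - K : ℕ) : ℕ∞) :: [] =
          (y ++ [((A - K : ℕ) : ℕ∞)]) ++ [((k - K : ℕ) : ℕ∞)] by simp,
        hve _ (by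
          have : 0 < k - K := by omega
          exact_mod_cast this.ne')]
      push_cast
      ring_nf
    · rw [List.concat_eq_append] at hβ
      subst hβ
      have heq' : (y ++ [(A:ℕ∞)]) ++ [(k:ℕ∞)] = (α ++ a :: b :: β') ++ [c] := by
        rw [heq]; simp
      obtain ⟨h1, h2⟩ := List.append_inj' heq' rfl
      injection h2 with h2 _
      subst h2
      have hmem : ∀ z ∈ α ++ a :: b :: β', z ≠ ⊤ := by
        intro z hz he
        apply hxT
        rw [h1]
        exact he ▸ hz
      have haT : a ≠ ⊤ := hmem a (by simp)
      have hbT : b ≠ ⊤ := hmem b (by simp)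
      obtain ⟨v, e, hv0, hvT, hve⟩ := contract_append_last
        (α ++ (a - (K:ℕ∞)) :: (b - (K:ℕ∞)) :: β').length
        (α ++ (a - (K:ℕ∞)) :: (b - (K:ℕ∞)) :: β') le_rfl
        (by
          intro hm
          rcases List.mem_append.mp hm with h' | h'
          · exact hmem ⊤ (List.mem_append_left _ h') rfl
          · rcases List.mem_cons.mp h' with h'' | h''
            · exact sub_ne_top haT K h''.symm
            · rcases List.mem_cons.mp h'' with h3 | h3
              · exact sub_ne_top hbT K h3.symm
              · exact hmem ⊤ (by simp [h3]) rfl)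
      refine ⟨v, k + e, ?_, hv0, hvT, by omega⟩
      rw [hr,
        show α ++ (a - (K:ℕ∞)) :: (b - (K:ℕ∞)) :: (β' ++ [(k:ℕ∞)]) =
          (α ++ (a - (K:ℕ∞)) :: (b - (K:ℕ∞)) :: β') ++ [(k:ℕ∞)] by simp,
        hve _ (by
          have : 0 < k := by omega
          exact_mod_cast this.ne')]
      push_cast
      ring_nf
  · -- (⊤,⊤) case impossible
    exfalso
    have : (⊤:ℕ∞) ∈ (y ++ [(A:ℕ∞)]) ++ [(k:ℕ∞)] := by
      rw [heq]; simp
    rw [List.mem_append, List.mem_append, List.mem_singleton, List.mem_singleton] at this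
    rcases this with (h' | h') | h'
    · exact hyT h'
    · exact ENat.coe_ne_top A h'.symm
    · exact ENat.coe_ne_top k h'.symm

lemma tc_eq_zero {l : List ℕ∞} (h : ⊤ ∉ l) : tc l = 0 := List.count_eq_zero.mpr h

lemma toNat_pos {a : ℕ∞} (h0 : a ≠ 0) (hT : a ≠ ⊤) : 1 ≤ a.toNat := by
  rcases Nat.eq_zero_or_pos a.toNat with h | h
  · rcases ENat.toNat_eq_zero.mp h with h' | h'
    · exact absurd h' h0
    · exact absurd h' hT
  · exact h

lemma len_le_sf : ∀ {w : List ℕ∞}, (0:ℕ∞) ∉ w → ⊤ ∉ w → w.length ≤ sf w := by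
  intro w
  induction w with
  | nil => simp
  | cons a t ih =>
    intro h0 hT
    have ha0 : a ≠ 0 := fun he => h0 (by simp [he])
    have haT : a ≠ ⊤ := fun he => hT (by simp [he])
    have h1 := toNat_pos ha0 haT
    have h2 := ih (fun hm => h0 (List.mem_cons_of_mem _ hm))
      (fun hm => hT (List.mem_cons_of_mem _ hm))
    simp only [List.length_cons, sf_cons]
    omega

lemma mem_le_sf {w : List ℕ∞} {a : ℕ∞} (ha : a ∈ w) : a.toNat ≤ sf w :=
  List.single_le_sum (by simp) _ (List.mem_map_of_mem ha)

lemma map_toNat_eq : ∀ {w : List ℕ∞}, ⊤ ∉ w →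
    (w.map ENat.toNat).map (Nat.cast : ℕ → ℕ∞) = w := by
  intro w
  induction w with
  | nil => simp
  | cons a t ih =>
    intro hT
    have haT : a ≠ ⊤ := fun he => hT (by simp [he])
    simp only [List.map_cons, List.cons.injEq]
    exact ⟨ENat.coe_toNat haT, ih (fun hm => hT (List.mem_cons_of_mem _ hm))⟩

lemma NPos_of_move {p q : List ℕ∞} (hP : PPos p) (h : Move p q) : NPos q := by
  obtain ⟨_, opt, hmove, hPP⟩ := hP
  exact ⟨opt q h, hmove q h, hPP q h⟩

lemma finite_bounded (B : ℕ) : {m : List ℕ | m.length ≤ B ∧ ∀ a ∈ m, a ≤ B}.Finite := by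
  have h1 : {m : List (Fin (B+1)) | m.length ≤ B}.Finite := List.finite_length_le _ _
  refine Set.Finite.subset (h1.image (List.map Fin.val)) ?_
  rintro m ⟨hl, hb⟩
  refine ⟨m.map (fun a => (⟨min a B, by omega⟩ : Fin (B+1))), by simpa using hl, ?_⟩
  rw [List.map_map]
  have h2 : ∀ a ∈ m, (Fin.val ∘ fun a => (⟨min a B, by omega⟩ : Fin (B+1))) a = a := by
    intro a ha
    simp [Nat.min_eq_left (hb a ha)]
  rw [List.map_congr_left h2]
  simp

lemma main_aux (l : List ℕ) : NPos (l.map (fun a => (a : ℕ∞)) ++ [⊤]) := by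
  classical
  by_contra hN
  set p := l.map (fun a => (a : ℕ∞)) ++ [⊤] with hp
  have hP : PPos p := (determined p).resolve_right hN
  have hTm : ⊤ ∉ l.map (fun a => (a : ℕ∞)) := by
    simp
  obtain ⟨x, e, hx0, hxT, hx⟩ :=
    contract_append_last (l.map (fun a => (a : ℕ∞))).length _ le_rfl hTm
  have hcp : contract p = x ++ [⊤] := by
    have h1 := hx ⊤ (by simp)
    rw [top_add] at h1
    exact h1
  have hopt : ∀ q, Move p q → NPos q := fun q h => NPos_of_move hP h
  have hmovej : ∀ a' : ℕ∞, a' ≠ ⊤ → Move p (contract (x ++ [a'])) := by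
    intro a' ha'
    show premove (contract p) _
    rw [hcp]
    exact Or.inr (Or.inl ⟨⊤, x, a', rfl, lt_top_iff_ne_top.mpr ha', rfl⟩)
  rcases List.eq_nil_or_concat x with hxe | ⟨y, cA, hxe⟩
  · subst hxe
    apply hN
    refine ⟨[], ?_, PPos_nil⟩
    have h2 := hmovej 0 (by simp)
    rwa [List.nil_append, contract_cons_zero, contract_nil] at h2
  · rw [List.concat_eq_append] at hxe
    subst hxe
    have hcAT : cA ≠ ⊤ := by
      intro he
      exact hxT (by simp [he])
    set A := cA.toNat with hA
    have hcA : cA = (A : ℕ∞) := (ENat.coe_toNat hcAT).symm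
    rw [hcA] at hcp hx0 hxT
    have hnotP : ∀ j : ℕ, ¬ PPos (contract ((y ++ [(A:ℕ∞)]) ++ [(j:ℕ∞)])) := by
      intro j hPc
      have hm := hmovej (j:ℕ∞) (ENat.coe_ne_top j)
      rw [hcA] at hm
      exact absurd (hopt _ hm) (not_NPos_of_PPos hPc)
    have main : ∀ i : ℕ, ∃ (w : List ℕ∞) (n : ℕ), PPos (w ++ [(n:ℕ∞)]) ∧
        (0:ℕ∞) ∉ w ∧ ⊤ ∉ w ∧ i + 1 ≤ n ∧ sf w + n ≤ sf y + 2*A + i := by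
      intro i
      set k := A + 1 + i with hk
      have hk0 : (k:ℕ∞) ≠ 0 := by exact_mod_cast (by omega : k ≠ 0)
      have hq0 : (0:ℕ∞) ∉ (y ++ [(A:ℕ∞)]) ++ [(k:ℕ∞)] := by
        intro hm
        rcases List.mem_append.mp hm with h' | h'
        · exact hx0 h'
        · exact hk0 (List.mem_singleton.mp h').symm
      have hqT : ⊤ ∉ (y ++ [(A:ℕ∞)]) ++ [(k:ℕ∞)] := by
        intro hm
        rcases List.mem_append.mp hm with h' | h'
        · exact hxT h'
        · exact ENat.coe_ne_top k (List.mem_singleton.mp h').symm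
      have hqc : contract ((y ++ [(A:ℕ∞)]) ++ [(k:ℕ∞)]) = (y ++ [(A:ℕ∞)]) ++ [(k:ℕ∞)] :=
        contract_eq_self hq0
      have hmq : Move p ((y ++ [(A:ℕ∞)]) ++ [(k:ℕ∞)]) := by
        have h3 := hmovej (k:ℕ∞) (ENat.coe_ne_top k)
        rwa [hcA, hqc] at h3
      obtain ⟨r, hmr, hrP⟩ := hopt _ hmq
      have hpm : premove ((y ++ [(A:ℕ∞)]) ++ [(k:ℕ∞)]) r := by
        have h4 : premove (contract ((y ++ [(A:ℕ∞)]) ++ [(k:ℕ∞)])) r := hmr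
        rwa [hqc] at h4
      obtain ⟨w, n, hrw, hw0, hwT, hn⟩ :=
        key_lemma y A hx0 hxT k (by omega) r hpm hnotP hrP
      have hdec := move_dec hmr
      have htq : tc ((y ++ [(A:ℕ∞)]) ++ [(k:ℕ∞)]) = 0 := tc_eq_zero hqT
      have htr : tc r = 0 := tc_eq_zero (by
        rw [hrw]
        intro hm
        rcases List.mem_append.mp hm with h' | h'
        · exact hwT h'
        · exact ENat.coe_ne_top n (List.mem_singleton.mp h').symm)
      have hsf : sf r < sf ((y ++ [(A:ℕ∞)]) ++ [(k:ℕ∞)]) := by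
        rcases hdec with h' | ⟨_, h'⟩
        · omega
        · exact h'
      have hsr : sf r = sf w + n := by
        rw [hrw]
        simp [ENat.toNat_coe]
      have hsq : sf ((y ++ [(A:ℕ∞)]) ++ [(k:ℕ∞)]) = sf y + A + k := by
        simp [ENat.toNat_coe]
        omega
      exact ⟨w, n, hrw ▸ hrP, hw0, hwT, by omega, by omega⟩
    choose w n hPn hw0 hwT hn hb using main
    set B := sf y + 2*A with hB
    have hgmem : ∀ i, ((w i).map ENat.toNat).length ≤ B ∧
        ∀ a ∈ (w i).map ENat.toNat, a ≤ B := by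
      intro i
      have h1 := hb i
      have h2 := hn i
      constructor
      · rw [List.length_map]
        exact le_trans (len_le_sf (hw0 i) (hwT i)) (by omega)
      · intro a ha
        rcases List.mem_map.mp ha with ⟨z, hz, rfl⟩
        exact le_trans (mem_le_sf hz) (by omega)
    obtain ⟨m, hm⟩ : ∃ m, {i : ℕ | (w i).map ENat.toNat = m}.Infinite := by
      by_contra hcon
      push_neg at hcon
      have huniv : (Set.univ : Set ℕ) ⊆
          ⋃ m ∈ {m : List ℕ | m.length ≤ B ∧ ∀ a ∈ m, a ≤ B},
            {i : ℕ | (w i).map ENat.toNat = m} :=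
        fun i _ => Set.mem_biUnion (hgmem i) rfl
      exact Set.infinite_univ (((finite_bounded B).biUnion (fun m _ => hcon m)).subset huniv)
    obtain ⟨i, hi⟩ := hm.nonempty
    obtain ⟨j, hj, hij⟩ := hm.exists_gt (i + B)
    have hi' : (w i).map ENat.toNat = m := hi
    have hj' : (w j).map ENat.toNat = m := hj
    have hww : w j = w i := by
      calc w j = ((w j).map ENat.toNat).map (Nat.cast : ℕ → ℕ∞) := (map_toNat_eq (hwT j)).symm
        _ = ((w i).map ENat.toNat).map (Nat.cast : ℕ → ℕ∞) := by rw [hi', hj']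
        _ = w i := map_toNat_eq (hwT i)
    have hnij : n i < n j := by
      have h1 := hb i
      have h2 := hn j
      omega
    have hni0 : ((n i : ℕ∞)) ≠ 0 := by
      have := hn i
      exact_mod_cast (by omega : n i ≠ 0)
    have hnj0 : ((n j : ℕ∞)) ≠ 0 := by
      have := hn j
      exact_mod_cast (by omega : n j ≠ 0)
    have h0i : (0:ℕ∞) ∉ w i ++ [(n i : ℕ∞)] := by
      intro hm'
      rcases List.mem_append.mp hm' with h' | h'
      · exact hw0 i h'
      · exact hni0 (List.mem_singleton.mp h').symm
    have h0j : (0:ℕ∞) ∉ w j ++ [(n j : ℕ∞)] := by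
      intro hm'
      rcases List.mem_append.mp hm' with h' | h'
      · exact hw0 j h'
      · exact hnj0 (List.mem_singleton.mp h').symm
    have hmove : Move (w j ++ [(n j : ℕ∞)]) (w i ++ [(n i : ℕ∞)]) := by
      show premove (contract _) _
      rw [contract_eq_self h0j]
      refine Or.inr (Or.inl ⟨(n j : ℕ∞), w j, (n i : ℕ∞), rfl, by exact_mod_cast hnij, ?_⟩)
      rw [hww, contract_eq_self h0i]
    exact absurd ⟨_, hmove, hPn i⟩ (not_NPos_of_PPos (hPn j))

end TwystOffInf


theorem last_infinity_N (l : List ℕ) :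
    TwystOffInf.NPos (l.map (fun a => (a : ℕ∞)) ++ [⊤]) :=
  TwystOffInf.main_aux l
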